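/- The multiplication m : R² → R of the monad of cubical reflexive sets with connections is a cartesian natural transformation: for every cubical set C, the square R²(C) → R²(1), R²(C) → R(C) (via m(C)), R(C) → R(1) (via R(!)), R²(1) → R(1) (via m(1)) is a pullback. -/

import Mathlib

/-- A cubical set (presheaf on the pre-cubical site, presented by its cells and
face maps subject to the cubical identities). -/
structure PreCubicalSet where
  cell : ℕ → Type
  face : ∀ {n : ℕ}, Bool → Fin (n + 1) → cell (n + 1) → cell n
  face_face : ∀ {n : ℕ} (α β : Bool) (i k : Fin (n + 1)), i ≤ k →
    ∀ x : cell (n + 2),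
      face α i (face β k.succ x) = face β k (face α i.castSucc x)

/-- A formal string or zigzag of degeneracy (`ε_j`) and connection (`Γ^γ_j`)
operations raising dimension `p` to dimension `n`. -/
inductive DegString : ℕ → ℕ → Type
  | nil {p : ℕ} : DegString p p
  | degen {p q : ℕ} (j : Fin (q + 1)) (z : DegString p q) : DegString p (q + 1)
  | conn {p q : ℕ} (γ : Bool) (j : Fin (q + 1)) (z : DegString p (q + 1)) :
      DegString p (q + 2)

/-- Concatenation of strings/zigzags of degeneracies. -/
def DegString.concat {p : ℕ} : ∀ {q n : ℕ}, DegString q n → DegString p q → DegString p n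
  | _, _, .nil, w => w
  | _, _, .degen j z, w => .degen j (z.concat w)
  | _, _, .conn γ j z, w => .conn γ j (z.concat w)

/-- An `n`-cell of `R(C)`: a pair of a string/zigzag of degeneracies `z` together
with a `p`-cell of `C`. -/
def RCell (cell : ℕ → Type) (n : ℕ) : Type := (p : ℕ) × DegString p n × cell p

/-- The action of the endofunctor `R` on (levelwise) maps of cells. -/
def rmap {C D : ℕ → Type} (f : ∀ p, C p → D p) (n : ℕ) :
    RCell C n → RCell D n :=
  fun x => ⟨x.1, x.2.1, f x.1 x.2.2⟩

/-- The multiplication `m : R² → R`, given by concatenation of strings/zigzags of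
degeneracies: `m (z (z' (c))) = (z + z') (c)`. -/
def rmult (cell : ℕ → Type) (n : ℕ) :
    RCell (RCell cell) n → RCell cell n :=
  fun x => ⟨x.2.2.1, x.2.1.concat x.2.2.2.1, x.2.2.2.2⟩

/-- The terminal cubical set has a unique cell `1(n)` in each dimension. -/
def OneCell : ℕ → Type := fun _ => PUnit

/-- The multiplication `m : R² → R` of the monad of cubical reflexive sets with
connections is a cartesian natural transformation: for every cubical set `C` the
square with top `R²(!) : R²(C) → R²(1)`, left `m(C)`, right `m(1)` and bottom
`R(!) : R(C) → R(1)` is a pullback (of cubical sets, i.e. a levelwise pullback in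
every dimension `n`). -/
theorem rmult_cartesian (C : PreCubicalSet) (n : ℕ) :
    @CategoryTheory.IsPullback Type _
      (RCell (RCell C.cell) n) (RCell (RCell OneCell) n)
      (RCell C.cell n) (RCell OneCell n)
      (TypeCat.ofHom (rmap (fun p => rmap (fun q (_ : C.cell q) => PUnit.unit) p) n))
      (TypeCat.ofHom (rmult C.cell n))
      (TypeCat.ofHom (rmult OneCell n))
      (TypeCat.ofHom (rmap (fun _ _ => PUnit.unit) n)) := by
  have w : @CategoryTheory.CommSq Type _
      (RCell (RCell C.cell) n) (RCell (RCell OneCell) n)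
      (RCell C.cell n) (RCell OneCell n)
      (TypeCat.ofHom (rmap (fun p => rmap (fun q (_ : C.cell q) => PUnit.unit) p) n))
      (TypeCat.ofHom (rmult C.cell n))
      (TypeCat.ofHom (rmult OneCell n))
      (TypeCat.ofHom (rmap (fun _ _ => PUnit.unit) n)) := ⟨rfl⟩
  refine CategoryTheory.IsPullback.of_isLimit' w
    ((CategoryTheory.Limits.PullbackCone.isLimitEquivBijective w.cone).symm ?_)
  constructor
  · rintro ⟨p, z, q, z', c⟩ ⟨p₂, z₂, q₂, z₂', c₂⟩ h
    have h1 := congrArg (fun t => t.1.1) h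
    have h2 := congrArg (fun t => t.1.2) h
    dsimp [CategoryTheory.Limits.PullbackCone.toPullbackObj, TypeCat.ofHom_apply, rmap, rmult] at h1 h2
    change (⟨p, z, ⟨q, z', PUnit.unit⟩⟩ : (p : ℕ) × DegString p n × ((q : ℕ) × DegString q p × PUnit)) = ⟨p₂, z₂, ⟨q₂, z₂', PUnit.unit⟩⟩ at h1
    change (⟨q, z.concat z', c⟩ : (q : ℕ) × DegString q n × C.cell q) = ⟨q₂, z₂.concat z₂', c₂⟩ at h2
    rw [Sigma.mk.inj_iff] at h1 h2
    obtain ⟨rfl, h1⟩ := h1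
    obtain ⟨hz, h1⟩ := Prod.mk_inj.mp (eq_of_heq h1)
    rw [Sigma.mk.inj_iff] at h1
    obtain ⟨rfl, h1⟩ := h1
    obtain ⟨hz', -⟩ := Prod.mk_inj.mp (eq_of_heq h1)
    obtain ⟨-, h2⟩ := h2
    obtain ⟨-, hc⟩ := Prod.mk_inj.mp (eq_of_heq h2)
    subst hz hz'
    rw [hc]
  · rintro ⟨⟨⟨p, z, q, z', u⟩, ⟨q₂, w₂, c⟩⟩, hfg⟩
    dsimp [TypeCat.ofHom_apply, rmap, rmult] at hfg
    change (⟨q, z.concat z', u⟩ : (q : ℕ) × DegString q n × PUnit) = ⟨q₂, w₂, PUnit.unit⟩ at hfg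
    rw [Sigma.mk.inj_iff] at hfg
    obtain ⟨rfl, h⟩ := hfg
    obtain ⟨hw, -⟩ := (Prod.mk.injEq ..).mp (eq_of_heq h)
    refine ⟨⟨p, z, q, z', c⟩, ?_⟩
    dsimp [CategoryTheory.Limits.PullbackCone.toPullbackObj, TypeCat.ofHom_apply, rmap, rmult]
    subst hw
    rfl
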